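/- arXiv:1612.02723 — 9 statements merged into one kernel-verified Lean document; each statement's English description precedes it below -/
import Mathlib

section
/- Let R be a commutative ring and I ⊆ R an ideal containing a nonzerodivisor. Then the trace ideal tr(I), defined as the sum of the images φ(I) over all R-module homomorphisms φ : I → R, equals I · I⁻¹, where I⁻¹ = {x ∈ Q(R) : xI ⊆ R} and Q(R) is the total ring of fractions of R. -/
open nonZeroDivisors

/-- The trace ideal of an `R`-module `M`: the sum of the images of all
`R`-linear maps `M → R`. -/
def traceIdeal (R : Type*) [CommRing R] (M : Type*) [AddCommGroup M] [Module R M] : Ideal R :=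
  ⨆ φ : M →ₗ[R] R, LinearMap.range φ

lemma trace_symm {R : Type*} [CommRing R] {I : Ideal R} (φ : I →ₗ[R] R) (a b : I) :
    (a : R) * φ b = (b : R) * φ a := by
  have h1 : ((a : R) • b : I) = (b : R) • a := by
    ext; simp [mul_comm]
  have := congrArg φ h1
  simpa [mul_comm] using this

/-- If `I` is an ideal of `R` containing a nonzerodivisor, then `tr(I) = I · I⁻¹`,
where `I⁻¹ = {x ∈ Q(R) : x·I ⊆ R}` is computed in the total ring of fractions `Q(R)`.
The equality is stated as an equality of `R`-submodules of `Q(R)`, identifying an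
ideal of `R` with its image in `Q(R)`. -/
theorem trace_eq_mul_inv (R : Type*) [CommRing R] (I : Ideal R)
    (h : ∃ x ∈ I, x ∈ R⁰) :
    Submodule.map (Algebra.linearMap R (FractionRing R)) (traceIdeal R I) =
      Submodule.map (Algebra.linearMap R (FractionRing R)) I *
        (1 / Submodule.map (Algebra.linearMap R (FractionRing R)) I) := by
  obtain ⟨d, hdI, hd⟩ := h
  set K := FractionRing R
  set f := Algebra.linearMap R K with hfdef
  have hf : Function.Injective f := IsFractionRing.injective R K
  set J := Submodule.map f I with hJ
  have hfd : IsUnit (f d) := IsLocalization.map_units K ⟨d, hd⟩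
  have fmul : ∀ p q : R, f (p * q) = f p * f q := fun p q => by
    simp [hfdef, Algebra.linearMap_apply, map_mul]
  apply le_antisymm
  · rw [traceIdeal, Submodule.map_iSup]
    apply iSup_le
    intro φ
    rintro _ ⟨_, ⟨a, rfl⟩, rfl⟩
    -- goal : f (φ a) ∈ J * (1/J)
    set u := hfd.unit
    set x : K := f (φ ⟨d, hdI⟩) * ↑u⁻¹ with hx
    have hmemdiv : x ∈ (1 : Submodule R K) / J := by
      rw [Submodule.mem_div_iff_forall_mul_mem]
      rintro _ ⟨b, hbI, rfl⟩
      have key : x * f b = f (φ ⟨b, hbI⟩) := by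
        have hc := trace_symm φ ⟨d, hdI⟩ ⟨b, hbI⟩
        have hu : (u : K) = f d := rfl
        have h2 : f d * (x * f b) = f d * f (φ ⟨b, hbI⟩) := by
          rw [hx]
          have : f d * (f (φ ⟨d, hdI⟩) * ↑u⁻¹ * f b)
              = (↑u * ↑u⁻¹) * (f (φ ⟨d, hdI⟩) * f b) := by rw [hu]; ring
          rw [this, Units.mul_inv, one_mul, ← fmul, ← fmul]
          congr 1
          simpa [mul_comm] using hc.symm
        exact hfd.mul_left_cancel h2
      rw [key, Submodule.one_eq_range]
      exact ⟨φ ⟨b, hbI⟩, rfl⟩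
    have key2 : f (φ a) = f ↑a * x := by
      have hc := trace_symm φ ⟨d, hdI⟩ a
      have hu : (u : K) = f d := rfl
      apply hfd.mul_left_cancel
      rw [hx]
      have : f d * (f ↑a * (f (φ ⟨d, hdI⟩) * ↑u⁻¹))
          = (↑u * ↑u⁻¹) * (f ↑a * f (φ ⟨d, hdI⟩)) := by rw [hu]; ring
      rw [this, Units.mul_inv, one_mul, ← fmul, ← fmul]
      congr 1
    rw [key2]
    exact Submodule.mul_mem_mul (Submodule.mem_map_of_mem a.2) hmemdiv
  · rw [Submodule.mul_le]
    rintro _ ⟨a, haI, rfl⟩ n hn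
    rw [Submodule.mem_div_iff_forall_mul_mem] at hn
    -- build φ : I →ₗ[R] R with f (φ b) = n * f b
    set g : I →ₗ[R] K := (Algebra.lmul R K n).comp (f.comp I.subtype) with hg
    have hrange : ∀ b : I, g b ∈ LinearMap.range f := by
      intro b
      have : n * f (b : R) ∈ (1 : Submodule R K) :=
        hn _ (Submodule.mem_map_of_mem b.2)
      rw [Submodule.one_eq_range] at this
      simpa [hg, hfdef] using this
    set φ : I →ₗ[R] R :=
      ((LinearEquiv.ofInjective f hf).symm.toLinearMap).comp
        (g.codRestrict (LinearMap.range f) hrange) with hφ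
    have hfφ : ∀ b : I, f (φ b) = n * f (b : R) := by
      intro b
      have : (LinearEquiv.ofInjective f hf) (φ b)
          = g.codRestrict (LinearMap.range f) hrange b := by
        simp [hφ]
      have h2 := congrArg (Subtype.val) this
      simpa [LinearEquiv.ofInjective_apply, hg] using h2
    have hmem : φ ⟨a, haI⟩ ∈ traceIdeal R I :=
      (le_iSup (fun ψ : I →ₗ[R] R => LinearMap.range ψ) φ) ⟨⟨a, haI⟩, rfl⟩
    have : f a * n = f (φ ⟨a, haI⟩) := by rw [hfφ]; ring
    rw [this]
    exact Submodule.mem_map_of_mem hmem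
end

section
/- Let R be a commutative ring and M, N two R-modules. Then tr(M)·tr(N) ⊆ tr(M ⊗_R N) ⊆ tr(M) ∩ tr(N), where tr denotes the trace ideal of a module. -/
open TensorProduct

lemma mem_traceIdeal {R : Type*} [CommRing R] {M : Type*} [AddCommGroup M] [Module R M]
    (φ : M →ₗ[R] R) (m : M) : φ m ∈ traceIdeal R M :=
  (le_iSup (fun φ : M →ₗ[R] R => LinearMap.range φ) φ) ⟨m, rfl⟩

/-- For `R`-modules `M`, `N` one has `tr(M)·tr(N) ⊆ tr(M ⊗_R N) ⊆ tr(M) ∩ tr(N)`. -/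
theorem trace_tensor_product (R : Type*) [CommRing R]
    (M N : Type*) [AddCommGroup M] [Module R M] [AddCommGroup N] [Module R N] :
    traceIdeal R M * traceIdeal R N ≤ traceIdeal R (M ⊗[R] N) ∧
      traceIdeal R (M ⊗[R] N) ≤ traceIdeal R M ⊓ traceIdeal R N := by
  constructor
  · rw [Ideal.mul_le]
    intro x hx y hy
    unfold traceIdeal at hx hy
    refine Submodule.iSup_induction _ (motive := fun x => x * y ∈ traceIdeal R (M ⊗[R] N)) hx
      (fun φ x hx => ?_) (by simp) (fun a b ha hb => by rw [add_mul]; exact add_mem ha hb)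
    obtain ⟨m, rfl⟩ := hx
    refine Submodule.iSup_induction _ (motive := fun y => φ m * y ∈ traceIdeal R (M ⊗[R] N)) hy
      (fun ψ y hy => ?_) (by simp) (fun a b ha hb => by rw [mul_add]; exact add_mem ha hb)
    obtain ⟨n, rfl⟩ := hy
    have : φ m * ψ n = (TensorProduct.lift ((LinearMap.mul R R).compl₁₂ φ ψ)) (m ⊗ₜ[R] n) := by
      simp
    rw [this]
    exact mem_traceIdeal _ _
  · intro x hx
    unfold traceIdeal at hx
    refine Submodule.iSup_induction _ (motive := fun x => x ∈ traceIdeal R M ⊓ traceIdeal R N) hx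
      (fun χ x hx => ?_) (by simp) (fun a b ha hb => add_mem ha hb)
    obtain ⟨t, rfl⟩ := hx
    induction t using TensorProduct.induction_on with
    | zero => simp
    | tmul m n =>
      constructor
      · exact mem_traceIdeal (χ.comp ((TensorProduct.mk R M N).flip n)) m
      · exact mem_traceIdeal (χ.comp (TensorProduct.mk R M N m)) n
    | add a b ha hb => rw [map_add]; exact add_mem ha hb
end

section
/- Let φ : R₁ → R be a flat ring homomorphism and M₁ a finitely presented R₁-module. Then the extension of tr_{R₁}(M₁) to R equals tr_R(M₁ ⊗_{R₁} R). -/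
open TensorProduct

set_option maxHeartbeats 1600000 in
set_option synthInstance.maxHeartbeats 400000 in
lemma traceIdeal_key {R₁ R : Type*} [CommRing R₁] [CommRing R] [Algebra R₁ R]
    (hflat : Module.Flat R₁ R)
    {M₁ : Type*} [AddCommGroup M₁] [Module R₁ M₁]
    (hfp : Module.FinitePresentation R₁ M₁)
    (h : M₁ →ₗ[R₁] R) (m : M₁) :
    h m ∈ Ideal.map (algebraMap R₁ R) (traceIdeal R₁ M₁) := by
  classical
  haveI := hflat
  obtain ⟨s, hs, hfg⟩ := hfp
  set J := Ideal.map (algebraMap R₁ R) (traceIdeal R₁ M₁) with hJ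
  set p : (↥s →₀ R₁) →ₗ[R₁] M₁ := Finsupp.linearCombination R₁ ((↑) : ↥s → M₁) with hp
  obtain ⟨t, ht⟩ := hfg
  have hsurj : Function.Surjective p := by
    apply LinearMap.range_eq_top.mp
    rw [hp, Finsupp.range_linearCombination, Subtype.range_coe_subtype, Finset.setOf_mem, hs]
  -- the "matrix" maps
  set A₁ : (↥s → R₁) →ₗ[R₁] (↥t → R₁) :=
    LinearMap.pi fun j => ∑ i, (j : ↥s →₀ R₁) i • LinearMap.proj i with hA₁
  set A₂ : (↥s → R) →ₗ[R₁] (↥t → R) :=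
    LinearMap.pi fun j => ∑ i, (j : ↥s →₀ R₁) i • LinearMap.proj i with hA₂
  have hA₁app : ∀ (v : ↥s → R₁) (j : ↥t), A₁ v j = ∑ i, (j : ↥s →₀ R₁) i • v i := by
    intro v j
    simp [hA₁]
  have hA₂app : ∀ (v : ↥s → R) (j : ↥t), A₂ v j = ∑ i, (j : ↥s →₀ R₁) i • v i := by
    intro v j
    simp [hA₂]
  -- step 1 : solutions over R₁ give elements of the trace ideal
  have step1 : ∀ v : ↥s → R₁, A₁ v = 0 → ∀ i : ↥s, v i ∈ traceIdeal R₁ M₁ := by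
    intro v hv i
    set g : (↥s →₀ R₁) →ₗ[R₁] R₁ := Finsupp.linearCombination R₁ v with hg
    have hker : LinearMap.ker p ≤ LinearMap.ker g := by
      rw [← ht, Submodule.span_le]
      intro x hx
      have : g x = A₁ v ⟨x, hx⟩ := by
        rw [hA₁app, hg, Finsupp.linearCombination_apply,
          Finsupp.sum_fintype _ _ (fun i => zero_smul R₁ (v i))]
      simp only [SetLike.mem_coe, LinearMap.mem_ker, this, hv, Pi.zero_apply]
    set f : M₁ →ₗ[R₁] R₁ :=
      ((LinearMap.ker p).liftQ g hker) ∘ₗ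
        (p.quotKerEquivOfSurjective hsurj).symm.toLinearMap with hf
    have hfp' : ∀ x, f (p x) = g x := by
      intro x
      have h1 : (p.quotKerEquivOfSurjective hsurj).symm (p x) = Submodule.Quotient.mk x := by
        apply (p.quotKerEquivOfSurjective hsurj).injective
        simp only [LinearEquiv.apply_symm_apply]
        simp [LinearMap.quotKerEquivOfSurjective, LinearMap.quotKerEquivRange_apply_mk]
      simp [hf, h1]
    have hv' : v i = f ((i : ↥s) : M₁) := by
      have : p (Finsupp.single i 1) = (i : M₁) := by simp [hp]
      rw [← this, hfp', hg]
      simp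
    rw [hv']
    have : LinearMap.range f ≤ traceIdeal R₁ M₁ := le_iSup (fun f : M₁ →ₗ[R₁] R₁ => LinearMap.range f) f
    exact this ⟨_, rfl⟩
  -- step 2 : flatness, exactness and compatibility
  have hexact : Function.Exact (LinearMap.ker A₁).subtype A₁ :=
    LinearMap.exact_subtype_ker_map A₁
  have htexact := Module.Flat.lTensor_exact (M := R) hexact
  set ψ := TensorProduct.piScalarRight R₁ R₁ R ↥s with hψ
  set ρ := TensorProduct.piScalarRight R₁ R₁ R ↥t with hρ
  have hcompat : A₂ ∘ₗ (ψ : R ⊗[R₁] (↥s → R₁) →ₗ[R₁] (↥s → R)) =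
      (ρ : R ⊗[R₁] (↥t → R₁) →ₗ[R₁] (↥t → R)) ∘ₗ LinearMap.lTensor R A₁ := by
    apply TensorProduct.ext'
    intro r v
    simp only [LinearMap.coe_comp, LinearEquiv.coe_coe, Function.comp_apply,
      LinearMap.lTensor_tmul, hψ, hρ, TensorProduct.piScalarRight_apply,
      TensorProduct.piScalarRightHom_tmul]
    funext j
    rw [hA₂app, hA₁app]
    rw [Finset.sum_smul]
    exact Finset.sum_congr rfl fun i _ => (smul_assoc _ _ _).symm
  -- step 3 : the element coming from h
  set w : ↥s → R := fun i => h (i : M₁) with hw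
  have hAw : A₂ w = 0 := by
    funext j
    have hjker : ((j : ↥s →₀ R₁)) ∈ LinearMap.ker p := by
      rw [← ht]; exact Submodule.subset_span j.2
    have hpj : p (j : ↥s →₀ R₁) = ∑ i, ((j : ↥s →₀ R₁)) i • ((i : ↥s) : M₁) := by
      have hsf := Finsupp.sum_fintype (↑j : ↥s →₀ R₁) (fun i a => a • (i : M₁))
        (fun i => zero_smul R₁ _)
      rw [hp, Finsupp.linearCombination_apply, hsf]
    have : (0 : R) = h (p (j : ↥s →₀ R₁)) := by
      rw [LinearMap.mem_ker.mp hjker, map_zero]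
    rw [hA₂app, Pi.zero_apply, this, hpj, map_sum]
    congr 1
    funext i
    rw [hw, map_smul]
  set x := ψ.symm w with hx
  have hx0 : LinearMap.lTensor R A₁ x = 0 := by
    rw [← LinearEquiv.map_eq_zero_iff ρ]
    have := LinearMap.congr_fun hcompat x
    simp only [LinearMap.coe_comp, LinearEquiv.coe_coe, Function.comp_apply] at this
    rw [← this, hx, LinearEquiv.apply_symm_apply, hAw]
  obtain ⟨y, hy⟩ := (htexact x).mp hx0
  -- step 4 : coordinates of w lie in J
  have step4 : ∀ (y : R ⊗[R₁] ↥(LinearMap.ker A₁)) (i : ↥s),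
      ψ (LinearMap.lTensor R (LinearMap.ker A₁).subtype y) i ∈ J := by
    intro y
    induction y using TensorProduct.induction_on with
    | zero =>
      intro i
      rw [map_zero, ψ.map_zero]
      exact Ideal.zero_mem _
    | tmul r z =>
      intro i
      simp only [LinearMap.lTensor_tmul, Submodule.coe_subtype, hψ,
        TensorProduct.piScalarRight_apply, TensorProduct.piScalarRightHom_tmul]
      rw [Algebra.smul_def]
      refine Ideal.mul_mem_right _ _ (Ideal.mem_map_of_mem _ ?_)
      exact step1 (z : ↥s → R₁) (LinearMap.mem_ker.mp z.2) i
    | add a b ha hb =>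
      intro i
      rw [map_add, ψ.map_add, Pi.add_apply]
      exact Ideal.add_mem _ (ha i) (hb i)
  have hwJ : ∀ i : ↥s, w i ∈ J := by
    intro i
    have : w = ψ (LinearMap.lTensor R (LinearMap.ker A₁).subtype y) := by
      rw [hy, hx, LinearEquiv.apply_symm_apply]
    rw [this]
    exact step4 y i
  -- step 5 : conclude by span induction
  have hm : m ∈ Submodule.span R₁ (s : Set M₁) := by rw [hs]; trivial
  induction hm using Submodule.span_induction with
  | mem m' hm' => exact hwJ ⟨m', hm'⟩
  | zero => rw [map_zero]; exact Ideal.zero_mem _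
  | add a b _ _ ha hb => rw [map_add]; exact Ideal.add_mem _ ha hb
  | smul c a _ ha =>
    rw [map_smul, Algebra.smul_def]
    exact Ideal.mul_mem_left _ _ ha

/-- If `R₁ → R` is a flat ring homomorphism and `M₁` a finitely presented `R₁`-module,
then `tr_{R₁}(M₁)·R = tr_R(M₁ ⊗_{R₁} R)`. -/
theorem trace_map_eq_of_flat {R₁ R : Type*} [CommRing R₁] [CommRing R] [Algebra R₁ R]
    (hflat : Module.Flat R₁ R)
    (M₁ : Type*) [AddCommGroup M₁] [Module R₁ M₁]
    (hfp : Module.FinitePresentation R₁ M₁) :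
    Ideal.map (algebraMap R₁ R) (traceIdeal R₁ M₁) = traceIdeal R (R ⊗[R₁] M₁) := by
  apply le_antisymm
  · rw [Ideal.map_le_iff_le_comap]
    refine iSup_le fun f => ?_
    rintro _ ⟨m, rfl⟩
    simp only [Ideal.mem_comap]
    have hg : algebraMap R₁ R (f m) =
        (((Algebra.linearMap R₁ R).comp f).liftBaseChange R) ((1 : R) ⊗ₜ m) := by
      rw [LinearMap.liftBaseChange_tmul]
      simp
    rw [hg]
    exact le_iSup (fun g : R ⊗[R₁] M₁ →ₗ[R] R => LinearMap.range g) _ ⟨_, rfl⟩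
  · refine iSup_le fun g => ?_
    rintro _ ⟨x, rfl⟩
    set h : M₁ →ₗ[R₁] R :=
      (g.restrictScalars R₁) ∘ₗ (TensorProduct.mk R₁ R M₁ 1) with hh
    induction x using TensorProduct.induction_on with
    | zero => rw [map_zero]; exact Ideal.zero_mem _
    | tmul r m =>
      have : (r ⊗ₜ[R₁] m : R ⊗[R₁] M₁) = r • ((1 : R) ⊗ₜ m) := by
        rw [TensorProduct.smul_tmul', smul_eq_mul, mul_one]
      rw [this, map_smul]
      exact Submodule.smul_mem _ r (traceIdeal_key hflat hfp h m)
    | add a b ha hb => rw [map_add]; exact Ideal.add_mem _ ha hb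
end

section
/- Let n > 2d ≥ 4 and let R_{n,d} be the d-th squarefree Veronese subalgebra of K[x₁,…,x_n]. For every sequence 1 ≤ i₁ < ⋯ < i_d ≤ n, the fraction 1/(x_{i₁}⋯x_{i_d}) belongs to the inverse of the canonical ideal ω_{R_{n,d}}: for every generator m = x₁^{a₁}⋯x_n^{a_n} of ω_{R_{n,d}} (i.e., a monomial with all a_i ≥ 1, d·a_i ≤ −1 + Σ_j a_j for all i, Σ_j a_j ≡ 0 mod d, and at most d−1 indices i with a_i ≥ 2), the product m/(x_{i₁}⋯x_{i_d}) is again a monomial in R_{n,d}. -/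
/-- Let `n > 2d ≥ 4`. For every generator `m = x₁^{a₁}⋯x_n^{a_n}` of the
canonical ideal of the squarefree Veronese algebra `R_{n,d}` (i.e. `a_i ≥ 1`
and `d·a_i ≤ −1 + Σ a_j` for all `i`, `d ∣ Σ a_j`, and at most `d−1` indices
with `a_i ≥ 2`) and every choice of `d` distinct indices `i₁ < ⋯ < i_d`, the
quotient `m/(x_{i₁}⋯x_{i_d})` is again a monomial in `R_{n,d}`, i.e. its
exponent vector satisfies the membership conditions for `R_{n,d}`. -/
theorem inv_canonical_squarefree_veronese (n d : ℕ) (hd : 2 ≤ d) (hnd : 2 * d < n)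
    (a : Fin n → ℕ)
    (h1 : ∀ i, 1 ≤ a i)
    (h2 : ∀ i, d * a i + 1 ≤ ∑ j, a j)
    (h3 : d ∣ ∑ j, a j)
    (h4 : (Finset.univ.filter fun i => 2 ≤ a i).card ≤ d - 1)
    (s : Finset (Fin n)) (hs : s.card = d) :
    (d ∣ ∑ j, (a j - if j ∈ s then 1 else 0)) ∧
      ∀ i, d * (a i - if i ∈ s then 1 else 0) ≤ ∑ j, (a j - if j ∈ s then 1 else 0) := by
  obtain ⟨T, hT⟩ : ∃ T, ∑ j, a j = T := ⟨_, rfl⟩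
  rw [hT] at h2 h3
  have hb : ∀ j ∈ Finset.univ, (if j ∈ s then 1 else 0) ≤ a j := by
    intro j _
    split
    · exact h1 j
    · exact Nat.zero_le _
  have hsum : ∑ j, (a j - if j ∈ s then 1 else 0) = T - d := by
    rw [Finset.sum_tsub_distrib Finset.univ hb, hT]
    congr 1
    rw [Finset.sum_ite_mem, Finset.univ_inter, Finset.sum_const, hs, smul_eq_mul, mul_one]
  rw [hsum]
  constructor
  · exact Nat.dvd_sub h3 dvd_rfl
  · intro i
    have key : d * a i + d ≤ T := by
      have hdvd : d ∣ T - d * a i := Nat.dvd_sub h3 ⟨a i, rfl⟩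
      have hpos : 0 < T - d * a i := by have := h2 i; omega
      have := Nat.le_of_dvd hpos hdvd
      omega
    by_cases hi : i ∈ s
    · simp only [hi, if_true]
      have := h1 i
      have : d * (a i - 1) + d = d * a i := by
        rw [Nat.mul_sub, Nat.mul_one]
        have : d ≤ d * a i := Nat.le_mul_of_pos_right d (h1 i)
        omega
      omega
    · simp only [hi, if_false, Nat.sub_zero]
      omega
end

section
/- A monomial x₁^{a₁}⋯x_n^{a_n} lies in the d-th squarefree Veronese subalgebra R_{n,d} of K[x₁,…,x_n] if and only if Σ_{i=1}^n a_i ≡ 0 mod d and d·a_i ≤ Σ_{j=1}^n a_j for all i = 1,…,n. -/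
private lemma veronese_aux (n d : ℕ) (hd : 1 ≤ d) (hdn : d ≤ n) :
    ∀ m (a : Fin n → ℕ), (∑ i, a i = d * m) → (∀ i, a i ≤ m) →
      a ∈ AddSubmonoid.closure {v : Fin n → ℕ | (∀ i, v i ≤ 1) ∧ ∑ i, v i = d} := by
  intro m
  induction m with
  | zero =>
    intro a hsum _
    have : a = 0 := by
      funext i
      have := Finset.sum_eq_zero_iff.mp (show ∑ i, a i = 0 by simpa using hsum) i (Finset.mem_univ i)
      simpa using this
    rw [this]
    exact AddSubmonoid.zero_mem _
  | succ m ih =>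
    intro a hsum hle
    set T : Finset (Fin n) := Finset.univ.filter (fun i => a i = m + 1) with hT
    set P : Finset (Fin n) := Finset.univ.filter (fun i => 1 ≤ a i) with hP
    have hTP : T ⊆ P := by
      intro i hi
      simp only [hT, Finset.mem_filter] at hi
      simp [hP, hi.2]
    have hTcard : T.card ≤ d := by
      have h1 : T.card * (m + 1) ≤ d * (m + 1) := by
        calc T.card * (m + 1) = ∑ i ∈ T, a i := by
              rw [Finset.sum_congr rfl (fun i hi => by
                simp only [hT, Finset.mem_filter] at hi; exact hi.2)]
              simp [mul_comm]
          _ ≤ ∑ i, a i := Finset.sum_le_sum_of_subset (Finset.subset_univ T)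
          _ = d * (m + 1) := hsum
      exact Nat.le_of_mul_le_mul_right h1 (Nat.succ_pos m)
    have hPcard : d ≤ P.card := by
      have h1 : d * (m + 1) ≤ P.card * (m + 1) := by
        calc d * (m + 1) = ∑ i, a i := hsum.symm
          _ = ∑ i ∈ P, a i := by
              refine (Finset.sum_subset (Finset.subset_univ P) ?_).symm
              intro i _ hi
              simp only [hP, Finset.mem_filter, Finset.mem_univ, true_and] at hi
              omega
          _ ≤ ∑ i ∈ P, (m + 1) := Finset.sum_le_sum (fun i _ => hle i)
          _ = P.card * (m + 1) := by simp [mul_comm]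
      exact Nat.le_of_mul_le_mul_right h1 (Nat.succ_pos m)
    obtain ⟨S, hTS, hSP, hScard⟩ := Finset.exists_subsuperset_card_eq hTP hTcard hPcard
    set v : Fin n → ℕ := fun i => if i ∈ S then 1 else 0 with hv
    have hvsum : ∑ i, v i = d := by
      simp [hv, hScard]
    have hva : ∀ i, v i ≤ a i := by
      intro i
      simp only [hv]
      split
      · next h =>
        have := hSP h
        simp only [hP, Finset.mem_filter] at this
        exact this.2
      · exact Nat.zero_le _
    set b : Fin n → ℕ := fun i => a i - v i with hb
    have hab : a = b + v := by
      funext i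
      have := hva i
      simp only [hb, Pi.add_apply]
      omega
    have hbsum : ∑ i, b i = d * m := by
      have : ∑ i, b i + ∑ i, v i = ∑ i, a i := by
        rw [← Finset.sum_add_distrib]
        exact Finset.sum_congr rfl (fun i _ => by have := hva i; simp only [hb]; omega)
      rw [hvsum, hsum] at this
      have hdm : d * (m + 1) = d * m + d := by ring
      omega
    have hble : ∀ i, b i ≤ m := by
      intro i
      by_cases hiS : i ∈ S
      · have := hle i
        simp only [hb, hv, if_pos hiS]
        omega
      · have hiT : i ∉ T := fun h => hiS (hTS h)
        simp only [hT, Finset.mem_filter, Finset.mem_univ, true_and] at hiT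
        have := hle i
        simp only [hb, hv, if_neg hiS]
        omega
    rw [hab]
    exact AddSubmonoid.add_mem _ (ih b hbsum hble)
      (AddSubmonoid.subset_closure ⟨fun i => by simp only [hv]; split <;> omega, hvsum⟩)

/-- A monomial `x₁^{a₁}⋯x_n^{a_n}` lies in the `d`-th squarefree Veronese
subalgebra `R_{n,d}` of `K[x₁,…,x_n]` iff `d ∣ Σ a_i` and `d·a_i ≤ Σ a_j` for
all `i`. In terms of exponent vectors: `a ∈ ℕⁿ` lies in the additive submonoid
generated by the 0-1 vectors with exactly `d` ones iff these two conditions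
hold. -/
theorem mem_squarefree_veronese_iff (n d : ℕ) (hd : 1 ≤ d) (hdn : d ≤ n)
    (a : Fin n → ℕ) :
    a ∈ AddSubmonoid.closure {v : Fin n → ℕ | (∀ i, v i ≤ 1) ∧ ∑ i, v i = d} ↔
      (d ∣ ∑ i, a i ∧ ∀ i, d * a i ≤ ∑ j, a j) := by
  constructor
  · intro h
    induction h using AddSubmonoid.closure_induction with
    | mem v hv =>
      refine ⟨by rw [hv.2], fun i => ?_⟩
      rw [hv.2]
      have := hv.1 i
      nlinarith
    | zero => simp
    | add x y _ _ hx hy =>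
      obtain ⟨hx1, hx2⟩ := hx
      obtain ⟨hy1, hy2⟩ := hy
      refine ⟨?_, fun i => ?_⟩
      · simpa [Finset.sum_add_distrib] using hx1.add hy1
      · have := hx2 i
        have := hy2 i
        simp only [Pi.add_apply, Finset.sum_add_distrib, mul_add]
        omega
  · rintro ⟨⟨m, hm⟩, h2⟩
    exact veronese_aux n d hd hdn m a hm
      (fun i => Nat.le_of_mul_le_mul_left (by rw [← hm]; exact h2 i) hd)
end

section
/- Let H = ⟨n₁,…,n_e⟩ be a numerical semigroup of minimal multiplicity, i.e., with n₁ < n₂ < ⋯ < n_e, gcd = 1, and n₁ = e. Then the set of pseudo-Frobenius numbers of H is PF(H) = {n₂ − n₁, …, n_e − n₁}. In particular the Frobenius number of H is n_e − n₁. -/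
/-- The set of pseudo-Frobenius numbers of `H`: the `f ∉ H` with `f + h ∈ H`
for every nonzero `h ∈ H`. -/
def PF (H : AddSubmonoid ℕ) : Set ℕ := {f | f ∉ H ∧ ∀ h ∈ H, h ≠ 0 → f + h ∈ H}

set_option maxHeartbeats 1600000 in
/-- If `H = ⟨n₁,…,n_e⟩` is a numerical semigroup of minimal multiplicity
(`n₁ = e`), then `PF(H) = {n₂ − n₁, …, n_e − n₁}`; in particular the Frobenius
number of `H` is `n_e − n₁`. -/
theorem pf_of_minimal_multiplicity (e : ℕ) (he : 1 < e) (n : Fin e → ℕ)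
    (hmono : StrictMono n) (H : AddSubmonoid ℕ)
    (hgen : H = AddSubmonoid.closure (Set.range n))
    (hmin : ∀ i, n i ∉ AddSubmonoid.closure (Set.range n \ {n i}))
    (hcof : {x : ℕ | x ∉ H}.Finite)
    (hmm : n ⟨0, by omega⟩ = e) :
    PF H = {x : ℕ | ∃ i : Fin e, (i : ℕ) ≠ 0 ∧ x = n i - n ⟨0, by omega⟩} ∧
      IsGreatest {x : ℕ | x ∉ H} (n ⟨e - 1, by omega⟩ - n ⟨0, by omega⟩) := by
  have he0 : 0 < e := by omega
  obtain ⟨i0, hi0v⟩ : ∃ i0 : Fin e, (i0 : ℕ) = 0 := ⟨⟨0, by omega⟩, rfl⟩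
  obtain ⟨m, hmdef⟩ : ∃ m : ℕ, m = n i0 := ⟨_, rfl⟩
  have hn0 : ∀ (p : 0 < e), n ⟨0, p⟩ = m := by
    intro p
    rw [hmdef]
    congr 1
    exact Fin.ext (by simp [hi0v])
  have hme : m = e := by rw [← hn0 he0]; exact hmm
  have hm2 : 2 ≤ m := by omega
  have hinj : Function.Injective n := hmono.injective
  have hgenmem : ∀ i, n i ∈ H := fun i => hgen ▸ AddSubmonoid.subset_closure ⟨i, rfl⟩
  have hmH : m ∈ H := by rw [hmdef]; exact hgenmem i0
  have hmul : ∀ t, t * m ∈ H := fun t => by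
    simpa using AddSubmonoid.nsmul_mem H hmH t
  have hne0 : ∀ i : Fin e, (i : ℕ) ≠ 0 → i ≠ i0 := by
    intro i hi h; exact hi (by rw [h, hi0v])
  have hlt : ∀ i : Fin e, (i : ℕ) ≠ 0 → m < n i := by
    intro i hi
    rw [hmdef]
    exact hmono (by rw [Fin.lt_def, hi0v]; omega)
  -- t * m is in the closure missing n i, for i ≠ i0
  have tmCl : ∀ i : Fin e, i ≠ i0 → ∀ t : ℕ,
      t * m ∈ AddSubmonoid.closure (Set.range n \ {n i}) := by
    intro i hi t
    have hmem : m ∈ Set.range n \ {n i} :=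
      ⟨⟨i0, hmdef.symm⟩, by rw [hmdef]; simp; exact fun h => hi (hinj h.symm)⟩
    simpa using AddSubmonoid.nsmul_mem _ (AddSubmonoid.subset_closure hmem) t
  have memCl : ∀ i j : Fin e, j ≠ i → i ≠ i0 → ∀ t : ℕ,
      n j + t * m ∈ AddSubmonoid.closure (Set.range n \ {n i}) := by
    intro i j hji hii0 t
    refine AddSubmonoid.add_mem _ (AddSubmonoid.subset_closure
      ⟨⟨j, rfl⟩, by simp; exact fun h => hji (hinj h)⟩) (tmCl i hii0 t)
  have hndvd : ∀ i : Fin e, (i : ℕ) ≠ 0 → ¬ m ∣ n i := by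
    intro i hi hdvd
    obtain ⟨t, ht⟩ := hdvd
    have h2 := tmCl i (hne0 i hi) t
    rw [mul_comm, ← ht] at h2
    exact hmin i h2
  have hmodpos : ∀ i : Fin e, (i : ℕ) ≠ 0 → 0 < n i % m ∧ n i % m < m := by
    intro i hi
    exact ⟨Nat.pos_of_ne_zero fun h => hndvd i hi (Nat.dvd_of_mod_eq_zero h),
      Nat.mod_lt _ (by omega)⟩
  -- residues are injective
  have hres_inj : ∀ i j : Fin e, (i : ℕ) ≠ 0 → (j : ℕ) ≠ 0 →
      n i % m = n j % m → i = j := by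
    have key : ∀ i j : Fin e, (j : ℕ) ≠ 0 → i < j → n i % m = n j % m → False := by
      intro i j hj hij hmod
      have hlt' : n i < n j := hmono hij
      have hd : m ∣ n j - n i := (Nat.modEq_iff_dvd' hlt'.le).mp hmod
      obtain ⟨t, ht⟩ := hd
      have : n i + t * m = n j := by
        have := Nat.mul_comm m t
        omega
      have h2 := memCl j i (ne_of_lt hij) (hne0 j hj) t
      rw [this] at h2
      exact hmin j h2
    intro i j hi hj hmod
    rcases lt_trichotomy i j with h | h | h
    · exact absurd (key i j hj h hmod) not_false
    · exact h
    · exact absurd (key j i hi h hmod.symm) not_false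
  -- residues are surjective onto (0, m)
  have hsurj : ∀ r, 0 < r → r < m → ∃ i : Fin e, (i : ℕ) ≠ 0 ∧ n i % m = r := by
    intro r hr1 hr2
    classical
    set T : Finset (Fin e) := Finset.univ.erase i0 with hT
    have hTcard : T.card = e - 1 := by
      rw [hT, Finset.card_erase_of_mem (Finset.mem_univ _)]
      simp
    have hmemT : ∀ i : Fin e, i ∈ T ↔ (i : ℕ) ≠ 0 := by
      intro i
      simp [hT, Fin.ext_iff, hi0v]
    have himg : T.image (fun i => n i % m) = Finset.Ioo 0 m := by
      apply Finset.eq_of_subset_of_card_le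
      · intro x hx
        simp only [Finset.mem_image] at hx
        obtain ⟨i, hiT, rfl⟩ := hx
        have := hmodpos i ((hmemT i).mp hiT)
        simp [Finset.mem_Ioo]; omega
      · rw [Nat.card_Ioo, Finset.card_image_of_injOn, hTcard]
        · omega
        · intro a ha b hb hab
          exact hres_inj a b ((hmemT a).mp ha) ((hmemT b).mp hb) hab
    have : r ∈ T.image (fun i => n i % m) := by
      rw [himg]; simp [Finset.mem_Ioo]; omega
    simp only [Finset.mem_image] at this
    obtain ⟨i, hiT, hieq⟩ := this
    exact ⟨i, (hmemT i).mp hiT, hieq⟩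
  -- key bound: if residues match, the generator is below the sum
  have hboundlt : ∀ k i j : Fin e, (k : ℕ) ≠ 0 → (i : ℕ) ≠ 0 → (j : ℕ) ≠ 0 →
      n k % m = (n i + n j) % m → n k < n i + n j := by
    intro k i j hk hi hj hmod
    by_contra hle
    push_neg at hle
    have hd' : m ∣ n k - (n i + n j) := (Nat.modEq_iff_dvd' hle).mp hmod.symm
    obtain ⟨t, ht⟩ := hd'
    have hik : n i < n k := by
      have := hlt j hj; omega
    have hjk : n j < n k := by
      have := hlt i hi; omega
    have heq : n i + (n j + t * m) = n k := by
      have := Nat.mul_comm m t; omega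
    have h2 := memCl k j (by intro hh; rw [hh] at hjk; exact lt_irrefl _ hjk) (hne0 k hk) t
    have hmemi : n i ∈ Set.range n \ {n k} := ⟨⟨i, rfl⟩, by simp; omega⟩
    have h3 := AddSubmonoid.add_mem _ (AddSubmonoid.subset_closure hmemi) h2
    rw [heq] at h3
    exact hmin k h3
  -- structure theorem for H
  have hS : ∀ x, x ∈ H ↔ (m ∣ x ∨ ∃ i : Fin e, (i : ℕ) ≠ 0 ∧ ∃ t, x = n i + t * m) := by
    intro x
    constructor
    · intro hx
      rw [hgen] at hx
      induction hx using AddSubmonoid.closure_induction with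
      | mem y hy =>
        obtain ⟨i, rfl⟩ := hy
        by_cases hi : (i : ℕ) = 0
        · left; have : i = i0 := Fin.ext (by rw [hi, hi0v])
          rw [this, ← hmdef]
        · right; exact ⟨i, hi, 0, by simp⟩
      | zero => left; exact dvd_zero m
      | add y z hy hz ihy ihz =>
        rcases ihy with hy' | ⟨i, hi, t, rfl⟩
        · rcases ihz with hz' | ⟨j, hj, s, rfl⟩
          · left; exact dvd_add hy' hz'
          · right
            obtain ⟨u, rfl⟩ := hy'
            exact ⟨j, hj, s + u, by ring⟩
        · rcases ihz with hz' | ⟨j, hj, s, rfl⟩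
          · right
            obtain ⟨u, rfl⟩ := hz'
            exact ⟨i, hi, t + u, by ring⟩
          · -- sum of two nonzero-index generators
            by_cases hr : (n i + n j) % m = 0
            · left
              have h1 : m ∣ n i + n j := Nat.dvd_of_mod_eq_zero hr
              have h2 : m ∣ t * m + s * m := ⟨t + s, by ring⟩
              have : n i + t * m + (n j + s * m) = (n i + n j) + (t * m + s * m) := by ring
              rw [this]
              exact dvd_add h1 h2
            · right
              obtain ⟨k, hk, hkr⟩ := hsurj ((n i + n j) % m) (Nat.pos_of_ne_zero hr)
                (Nat.mod_lt _ (by omega))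
              have hklt := hboundlt k i j hk hi hj hkr
              have hd : m ∣ n i + n j - n k :=
                (Nat.modEq_iff_dvd' hklt.le).mp hkr
              obtain ⟨u, hu⟩ := hd
              refine ⟨k, hk, u + t + s, ?_⟩
              have h1 : m * u = u * m := Nat.mul_comm m u
              have h2 : (u + t + s) * m = u * m + t * m + s * m := by ring
              omega
    · intro hx
      rcases hx with ⟨s, rfl⟩ | ⟨i, _, t, rfl⟩
      · rw [mul_comm]; exact hmul s
      · exact AddSubmonoid.add_mem _ (hgenmem i) (hmul t)
  -- sum of two high generators minus m is in H
  have hsumS : ∀ i j : Fin e, (i : ℕ) ≠ 0 → (j : ℕ) ≠ 0 → n i + n j - m ∈ H := by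
    intro i j hi hj
    have hsum : n i + n j ∈ H := AddSubmonoid.add_mem _ (hgenmem i) (hgenmem j)
    have hi' := hlt i hi
    have hj' := hlt j hj
    rcases (hS _).mp hsum with hd | ⟨k, hk, t, ht⟩
    · apply (hS _).mpr
      left
      exact Nat.dvd_sub hd dvd_rfl
    · apply (hS _).mpr
      right
      have hk' := hlt k hk
      have ht0 : t ≠ 0 := by
        intro h
        rw [h] at ht
        simp at ht
        -- n i + n j = n k : contradicts minimality
        have hik : n i < n k := by omega
        have hjk : n j < n k := by omega
        have h2 := memCl k j (by intro hh; rw [hh] at hjk; exact lt_irrefl _ hjk) (hne0 k hk) 0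
        have hmemi : n i ∈ Set.range n \ {n k} := ⟨⟨i, rfl⟩, by simp; omega⟩
        have h3 := AddSubmonoid.add_mem _ (AddSubmonoid.subset_closure hmemi) h2
        rw [show n i + (n j + 0 * m) = n k by omega] at h3
        exact hmin k h3
      refine ⟨k, hk, t - 1, ?_⟩
      have h1 : (t - 1) * m + m = t * m := by
        cases t with
        | zero => exact absurd rfl ht0
        | succ t' => simp [Nat.succ_sub_one]; ring
      omega
  -- PF description
  have hPF : PF H = {x : ℕ | ∃ i : Fin e, (i : ℕ) ≠ 0 ∧ x = n i - m} := by
    ext f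
    constructor
    · rintro ⟨hf, hps⟩
      have h1 : f + m ∈ H := hps m hmH (by omega)
      rcases (hS _).mp h1 with hd | ⟨i, hi, t, ht⟩
      · exfalso
        apply hf
        apply (hS _).mpr
        left
        have : m ∣ (f + m) - m := Nat.dvd_sub hd dvd_rfl
        simpa using this
      · cases t with
        | zero =>
          simp at ht
          exact ⟨i, hi, by omega⟩
        | succ t' =>
          exfalso
          apply hf
          apply (hS _).mpr
          right
          refine ⟨i, hi, t', ?_⟩
          have : (t' + 1) * m = t' * m + m := by ring
          omega
    · rintro ⟨i, hi, rfl⟩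
      have him := hlt i hi
      constructor
      · intro hfH
        rcases (hS _).mp hfH with hd | ⟨j, hj, t, ht⟩
        · apply hndvd i hi
          have : n i = (n i - m) + m := by omega
          rw [this]
          exact dvd_add hd dvd_rfl
        · apply hmin i
          have hji : n j < n i := by
            have := hlt j hj; omega
          have heq : n j + (t + 1) * m = n i := by
            have : (t + 1) * m = t * m + m := by ring
            omega
          have h2 := memCl i j (by intro hh; rw [hh] at hji; exact lt_irrefl _ hji)
            (hne0 i hi) (t + 1)
          rw [heq] at h2
          exact h2
      · intro h hh hh0
        rcases (hS _).mp hh with ⟨s, rfl⟩ | ⟨j, hj, t, rfl⟩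
        · apply (hS _).mpr
          right
          refine ⟨i, hi, s - 1, ?_⟩
          have hs : s ≠ 0 := by rintro rfl; simp at hh0
          have h1 : (s - 1) * m + m = s * m := by
            cases s with
            | zero => exact absurd rfl hs
            | succ s' => simp [Nat.succ_sub_one]; ring
          have h2 : m * s = s * m := Nat.mul_comm m s
          omega
        · have hkey := hsumS i j hi hj
          have hjm := hlt j hj
          have : n i - m + (n j + t * m) = (n i + n j - m) + t * m := by omega
          rw [this]
          exact AddSubmonoid.add_mem _ hkey (hmul t)
  have hmain : ∀ ie : Fin e, (ie : ℕ) = e - 1 → IsGreatest {x : ℕ | x ∉ H} (n ie - m) := by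
    intro ie hiev
    have hie : (ie : ℕ) ≠ 0 := by omega
    constructor
    · show n ie - m ∉ H
      have : n ie - m ∈ PF H := by
        rw [hPF]; exact ⟨ie, hie, rfl⟩
      exact this.1
    · intro x hx
      simp only [Set.mem_setOf_eq] at hx
      by_contra hgt
      push_neg at hgt
      apply hx
      by_cases hr : x % m = 0
      · exact (hS _).mpr (Or.inl (Nat.dvd_of_mod_eq_zero hr))
      · obtain ⟨k, hk, hkr⟩ := hsurj (x % m) (Nat.pos_of_ne_zero hr) (Nat.mod_lt _ (by omega))
        have hkle : n k ≤ n ie := by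
          apply hmono.monotone
          rw [Fin.le_def, hiev]
          omega
        have hxk : n k ≤ x := by
          by_contra hxk
          push_neg at hxk
          have hd : m ∣ n k - x := (Nat.modEq_iff_dvd' hxk.le).mp hkr.symm
          have h1 : n k - x < m := by omega
          have h2 : 0 < n k - x := by omega
          obtain ⟨u, hu⟩ := hd
          rcases Nat.eq_zero_or_pos u with rfl | hu0
          · rw [mul_zero] at hu; omega
          · have h3 : m ≤ m * u := Nat.le_mul_of_pos_right m hu0
            rw [← hu] at h3
            omega
        have hd : m ∣ x - n k := (Nat.modEq_iff_dvd' hxk).mp hkr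
        obtain ⟨u, hu⟩ := hd
        apply (hS _).mpr
        right
        refine ⟨k, hk, u, ?_⟩
        have := Nat.mul_comm m u
        omega
  constructor
  · rw [hPF]
    ext x
    simp only [Set.mem_setOf_eq]
    constructor
    · rintro ⟨i, hi, rfl⟩
      exact ⟨i, hi, congrArg (fun y => n i - y) (hn0 _).symm⟩
    · rintro ⟨i, hi, rfl⟩
      exact ⟨i, hi, congrArg (fun y => n i - y) (hn0 _)⟩
  · have h := hmain ⟨e - 1, Nat.sub_lt he0 Nat.one_pos⟩ rfl
    have h2 : m = n (⟨0, he0⟩ : Fin e) := (hn0 he0).symm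
    rw [h2] at h
    exact h
end

section
/- Let e > 2 and H = ⟨a, a+d, a+2d, …, a+(e−1)d⟩ with a, d coprime positive integers and e ≤ a. Then H is symmetric if and only if a ≡ 2 (mod e−1). -/
/-- The set of integers belonging to the numerical semigroup `H ⊆ ℕ`. -/
def HZ (H : AddSubmonoid ℕ) : Set ℤ := {z : ℤ | ∃ h ∈ H, (h : ℤ) = z}

/-- The canonical relative ideal `Ω_H = {x ∈ ℤ : F − x ∉ H}`, where `F` is the
Frobenius number of `H`. -/
def Omega (H : AddSubmonoid ℕ) (F : ℕ) : Set ℤ := {x : ℤ | (F : ℤ) - x ∉ HZ H}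

/-- The anti-canonical relative ideal `Ω_H⁻¹ = {z ∈ ℤ : z + Ω_H ⊆ H}`. -/
def OmegaInv (H : AddSubmonoid ℕ) (F : ℕ) : Set ℤ :=
  {z : ℤ | ∀ w ∈ Omega H F, z + w ∈ HZ H}

/-- ceiling division `⌈r/m⌉`. -/
def clf (m r : ℕ) : ℕ := (r + m - 1) / m

lemma clf_zero (m : ℕ) : clf m 0 = 0 := by
  unfold clf
  rcases Nat.eq_zero_or_pos m with h | h
  · simp [h]
  · exact Nat.div_eq_of_lt (by omega)

lemma clf_one (m : ℕ) (hm : 0 < m) : clf m 1 = 1 := by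
  unfold clf
  have : 1 + m - 1 = m := by omega
  rw [this, Nat.div_self hm]

lemma clf_mono (m : ℕ) {r s : ℕ} (h : r ≤ s) : clf m r ≤ clf m s :=
  Nat.div_le_div_right (by omega)

lemma le_mul_clf (m r : ℕ) (hm : 0 < m) : r ≤ m * clf m r := by
  unfold clf
  have h1 := Nat.div_add_mod (r + m - 1) m
  have h2 := Nat.mod_lt (r + m - 1) hm
  omega

lemma clf_le (m r k : ℕ) (hm : 0 < m) (h : r ≤ k * m) : clf m r ≤ k := by
  unfold clf
  have hc : k * m = m * k := Nat.mul_comm k m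
  have hle : (r + m - 1) ≤ m * k + (m - 1) := by omega
  calc (r + m - 1) / m ≤ (m * k + (m - 1)) / m := Nat.div_le_div_right hle
    _ = k + (m-1)/m := by rw [Nat.mul_add_div hm]
    _ = k := by rw [Nat.div_eq_of_lt (by omega)]; ring

lemma clf_pos (m r : ℕ) (hm : 0 < m) (hr : 0 < r) : 0 < clf m r := by
  have h1 := clf_one m hm
  have h2 := clf_mono m (show (1:ℕ) ≤ r from hr)
  omega

lemma clf_add_le (m r s : ℕ) (hm : 0 < m) (h : (r + s) % m = 1) :
    clf m r + clf m s ≤ clf m (r + s) := by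
  obtain ⟨q, hq⟩ : ∃ q, r + s = m * q + 1 := ⟨(r+s)/m, by have := Nat.div_add_mod (r+s) m; omega⟩
  have hqq : m * (q + 1) = m * q + m := by ring
  have hval : clf m (r + s) = q + 1 := by
    unfold clf
    have : r + s + m - 1 = m * (q + 1) := by omega
    rw [this, Nat.mul_div_cancel_left _ hm]
  rw [hval]
  have hsum : clf m r + clf m s ≤ ((r + m - 1) + (s + m - 1)) / m := by
    unfold clf
    rw [Nat.le_div_iff_mul_le hm, Nat.add_mul]
    have := Nat.div_mul_le_self (r + m - 1) m
    have := Nat.div_mul_le_self (s + m - 1) m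
    omega
  have : ((r + m - 1) + (s + m - 1)) / m = q + 1 := by
    have heq : (r + m - 1) + (s + m - 1) = m * (q + 1) + (m - 1) := by omega
    rw [heq, Nat.mul_add_div hm, Nat.div_eq_of_lt (by omega)]
  omega

lemma clf_succ_eq (m b : ℕ) (hm : 0 < m) (h : (b + 1) % m ≠ 1 % m) :
    clf m (b + 1) = clf m b := by
  unfold clf
  have h1 : b + 1 + m - 1 = (b + m - 1) + 1 := by omega
  rw [h1, Nat.succ_div]
  have hnd : ¬ m ∣ (b + m - 1 + 1) := by
    intro hdvd
    have h2 : b + m - 1 + 1 = b + m := by omega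
    rw [h2] at hdvd
    have hb : m ∣ b := (Nat.dvd_add_right (dvd_refl m)).mp (by rwa [Nat.add_comm] at hdvd)
    apply h
    obtain ⟨c, hc⟩ := hb
    subst hc
    simp [Nat.mul_add_mod]
  simp [hnd]

lemma mem_closure_iff_rep (e a d : ℕ) (he : 0 < e) (n : ℕ) :
    n ∈ AddSubmonoid.closure (Set.range fun i : Fin e => a + (i : ℕ) * d) ↔
      ∃ k t : ℕ, t ≤ k * (e - 1) ∧ n = k * a + t * d := by
  constructor
  · intro hn
    induction hn using AddSubmonoid.closure_induction with
    | mem x hx =>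
      obtain ⟨i, hi⟩ := hx
      simp only at hi
      refine ⟨1, i, ?_, ?_⟩
      · have := i.isLt; omega
      · omega
    | zero => exact ⟨0, 0, by omega, by omega⟩
    | add x y hx hy ihx ihy =>
      obtain ⟨k1, t1, h1, e1⟩ := ihx
      obtain ⟨k2, t2, h2, e2⟩ := ihy
      refine ⟨k1 + k2, t1 + t2, ?_, ?_⟩
      · calc t1 + t2 ≤ k1 * (e-1) + k2 * (e-1) := by omega
          _ = (k1 + k2) * (e - 1) := by ring
      · subst e1 e2; ring
  · rintro ⟨k, t, hle, rfl⟩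
    induction k generalizing t with
    | zero =>
      have ht : t = 0 := by simpa using hle
      subst ht
      simpa using AddSubmonoid.zero_mem _
    | succ k ih =>
      by_cases ht : t ≤ e - 1
      · have hgen : a + t * d ∈ AddSubmonoid.closure (Set.range fun i : Fin e => a + (i : ℕ) * d) :=
          AddSubmonoid.subset_closure ⟨⟨t, by omega⟩, rfl⟩
        have hrest := ih 0 (by omega)
        simp only [Nat.zero_mul, Nat.add_zero] at hrest
        have hmem := AddSubmonoid.add_mem _ hgen hrest
        convert hmem using 1
        ring
      · have hgen : a + (e-1) * d ∈ AddSubmonoid.closure (Set.range fun i : Fin e => a + (i : ℕ) * d) :=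
          AddSubmonoid.subset_closure ⟨⟨e-1, by omega⟩, rfl⟩
        have hrest := ih (t - (e-1)) (by
          have h2 : (k+1)*(e-1) = k*(e-1) + (e-1) := by ring
          omega)
        have hmem := AddSubmonoid.add_mem _ hgen hrest
        convert hmem using 1
        have h3 : (t - (e-1)) * d = t * d - (e-1) * d := Nat.sub_mul _ _ _
        have h4 : (e-1) * d ≤ t * d := Nat.mul_le_mul_right d (by omega)
        have h5 : (k+1)*a = k*a + a := by ring
        omega

lemma exists_rep (a d : ℕ) (ha : 0 < a) (hcop : Nat.Coprime a d) (x : ℤ) :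
    ∃ (k : ℤ) (r : ℕ), r < a ∧ x = k * (a:ℤ) + (r:ℤ) * d := by
  have hcopZ : IsCoprime (a : ℤ) (d : ℤ) := Nat.isCoprime_iff_coprime.mpr hcop
  obtain ⟨u, v, huv⟩ := hcopZ
  -- u * a + v * d = 1
  set q : ℤ := (x * v) / a with hq
  set r0 : ℤ := (x * v) % a with hr0
  have hr0nn : 0 ≤ r0 := Int.emod_nonneg _ (by exact_mod_cast ha.ne')
  have hr0lt : r0 < a := Int.emod_lt_of_pos _ (by exact_mod_cast ha)
  have hdiv : (a:ℤ) * q + r0 = x * v := Int.mul_ediv_add_emod _ _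
  refine ⟨x * u + q * d, r0.toNat, ?_, ?_⟩
  · exact_mod_cast (Int.toNat_lt' ha).mpr hr0lt
  · have : (r0.toNat : ℤ) = r0 := Int.toNat_of_nonneg hr0nn
    rw [this]
    have hx : x * (u * a + v * d) = x := by rw [huv]; ring
    linear_combination -hx - (d:ℤ) * hdiv

lemma rep_unique (a d : ℕ) (ha : 0 < a) (hcop : Nat.Coprime a d) {k k' : ℤ} {r r' : ℕ}
    (hr : r < a) (hr' : r' < a)
    (h : k * (a:ℤ) + (r:ℤ) * d = k' * (a:ℤ) + (r':ℤ) * d) : r = r' ∧ k = k' := by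
  have hcopZ : IsCoprime (a : ℤ) (d : ℤ) := Nat.isCoprime_iff_coprime.mpr hcop
  have hdvd : (a:ℤ) ∣ ((r':ℤ) - r) * d := ⟨k - k', by linarith⟩
  have hdvd2 : (a:ℤ) ∣ ((r':ℤ) - r) := hcopZ.dvd_of_dvd_mul_right hdvd
  have hrr : (r:ℤ) = r' := by
    have habs : |(r':ℤ) - r| < a := by
      rw [abs_lt]
      constructor <;> [skip; skip] <;>
        (push_cast; omega)
    have := Int.eq_zero_of_abs_lt_dvd hdvd2 habs
    omega
  have hr2 : r = r' := by exact_mod_cast hrr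
  refine ⟨hr2, ?_⟩
  subst hr2
  have : k * (a:ℤ) = k' * a := by linarith
  exact mul_right_cancel₀ (by exact_mod_cast ha.ne') this

section Main

variable (e a d : ℕ)

lemma mem_HZ_iff (he : 2 < e) (ha : 0 < a) (hd : 0 < d) (hcop : Nat.Coprime a d)
    (H : AddSubmonoid ℕ)
    (hH : H = AddSubmonoid.closure (Set.range fun i : Fin e => a + (i : ℕ) * d))
    (x : ℤ) :
    x ∈ HZ H ↔ ∃ (k : ℤ) (r : ℕ), r < a ∧ x = k * (a:ℤ) + (r:ℤ) * d ∧
      ((clf (e-1) r : ℤ) ≤ k) := by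
  subst hH
  constructor
  · rintro ⟨h, hmem, rfl⟩
    rw [mem_closure_iff_rep e a d (by omega)] at hmem
    obtain ⟨k, t, hle, rfl⟩ := hmem
    set u := t / a with hu
    set r := t % a with hr
    have hta : t = a * u + r := by rw [hu, hr]; exact (Nat.div_add_mod t a).symm
    have hra : r < a := Nat.mod_lt _ ha
    refine ⟨(k : ℤ) + (u:ℤ) * d, r, hra, ?_, ?_⟩
    · push_cast
      have htZ : (t:ℤ) = (a:ℤ) * u + r := by exact_mod_cast hta
      linear_combination (d:ℤ) * htZ
    · have h1 : clf (e-1) r ≤ clf (e-1) t := clf_mono _ (by omega)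
      have h2 : clf (e-1) t ≤ k := clf_le (e-1) t k (by omega) hle
      have h3 : (0:ℤ) ≤ (u:ℤ) * d := by positivity
      push_cast
      have : (clf (e-1) r : ℤ) ≤ (k : ℤ) := by exact_mod_cast h1.trans h2
      linarith
  · rintro ⟨k, r, hra, rfl, hk⟩
    have hk0 : 0 ≤ k := le_trans (by positivity) hk
    refine ⟨k.toNat * a + r * d, ?_, ?_⟩
    · rw [mem_closure_iff_rep e a d (by omega)]
      refine ⟨k.toNat, r, ?_, rfl⟩
      have h1 : r ≤ (e-1) * clf (e-1) r := le_mul_clf _ _ (by omega)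
      have h2 : clf (e-1) r ≤ k.toNat := by omega
      calc r ≤ (e-1) * clf (e-1) r := h1
        _ ≤ (e-1) * k.toNat := Nat.mul_le_mul_left _ h2
        _ = k.toNat * (e-1) := Nat.mul_comm _ _
    · push_cast
      rw [Int.toNat_of_nonneg hk0]

lemma not_mem_HZ (he : 2 < e) (ha : 0 < a) (hd : 0 < d) (hcop : Nat.Coprime a d)
    (H : AddSubmonoid ℕ)
    (hH : H = AddSubmonoid.closure (Set.range fun i : Fin e => a + (i : ℕ) * d))
    {x : ℤ} {k : ℤ} {r : ℕ} (hra : r < a) (hx : x = k * (a:ℤ) + (r:ℤ) * d)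
    (hk : k < (clf (e-1) r : ℤ)) : x ∉ HZ H := by
  rw [mem_HZ_iff e a d he ha hd hcop H hH]
  rintro ⟨k', r', hr'a, hx', hk'⟩
  rw [hx] at hx'
  obtain ⟨hr1, hk1⟩ := rep_unique a d ha hcop hra hr'a hx'
  subst hr1
  omega

/-- the Frobenius number -/
lemma frobenius_eq (e a d : ℕ) (he : 2 < e) (ha : 0 < a) (hd : 0 < d) (hcop : Nat.Coprime a d)
    (hea : e ≤ a)
    (H : AddSubmonoid ℕ)
    (hH : H = AddSubmonoid.closure (Set.range fun i : Fin e => a + (i : ℕ) * d))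
    (F : ℕ) (hF : IsGreatest {x : ℕ | x ∉ H} F) :
    F = (clf (e-1) (a-1) - 1) * a + (a-1) * d := by
  have hclpos : 0 < clf (e-1) (a-1) := clf_pos (e-1) (a-1) (by omega) (by omega)
  set G := (clf (e-1) (a-1) - 1) * a + (a-1) * d with hG
  have hGZ : (G : ℤ) = ((clf (e-1) (a-1) : ℤ) - 1) * a + ((a-1 : ℕ) : ℤ) * d := by
    rw [hG]
    push_cast [Nat.cast_sub (show 1 ≤ clf (e-1) (a-1) from hclpos)]
    ring
  refine hF.unique ⟨?_, ?_⟩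
  · -- G ∉ H
    intro hGH
    have : (G:ℤ) ∈ HZ H := ⟨G, hGH, rfl⟩
    exact not_mem_HZ e a d he ha hd hcop H hH (by omega) hGZ (by omega) this
  · -- ∀ n ∉ H, n ≤ G
    intro n hn
    simp only [Set.mem_setOf_eq] at hn
    have hnz : (n:ℤ) ∉ HZ H := by
      rintro ⟨h, hh, hhe⟩
      have : h = n := by exact_mod_cast hhe
      subst this; exact hn hh
    rw [mem_HZ_iff e a d he ha hd hcop H hH] at hnz
    push_neg at hnz
    obtain ⟨k, r, hra, hx⟩ := exists_rep a d ha hcop (n:ℤ)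
    have hk := hnz k r hra hx
    have h1 : k ≤ (clf (e-1) r : ℤ) - 1 := by omega
    have h2 : (clf (e-1) r : ℤ) ≤ (clf (e-1) (a-1) : ℤ) := by
      exact_mod_cast clf_mono (e-1) (show r ≤ a - 1 by omega)
    have h3 : (r:ℤ) ≤ ((a-1 : ℕ) : ℤ) := by push_cast; omega
    have hle : (n:ℤ) ≤ (G:ℤ) := by
      rw [hx, hGZ]
      have e1 : k * (a:ℤ) ≤ ((clf (e-1) (a-1) : ℤ) - 1) * a :=
        mul_le_mul_of_nonneg_right (by omega) (by positivity)
      have e2 : (r:ℤ) * d ≤ ((a-1:ℕ):ℤ) * d :=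
        mul_le_mul_of_nonneg_right h3 (by positivity)
      linarith
    exact_mod_cast hle

end Main

/-- Let `e > 2` and `H = ⟨a, a+d, …, a+(e−1)d⟩` with `a, d` coprime positive
integers and `e ≤ a`. Then `H` is symmetric iff `a ≡ 2 (mod e−1)`. -/
theorem arithmetic_symmetric_iff (e a d : ℕ) (he : 2 < e) (ha : 0 < a)
    (hd : 0 < d) (hcop : Nat.Coprime a d) (hea : e ≤ a)
    (H : AddSubmonoid ℕ)
    (hH : H = AddSubmonoid.closure (Set.range fun i : Fin e => a + (i : ℕ) * d))
    (F : ℕ) (hF : IsGreatest {x : ℕ | x ∉ H} F) :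
    (∀ x : ℤ, x ∈ HZ H ∨ (F : ℤ) - x ∈ HZ H) ↔ a % (e - 1) = 2 % (e - 1) := by
  have hm2 : 2 ≤ e - 1 := by omega
  have hFval := frobenius_eq e a d he ha hd hcop hea H hH F hF
  have hclpos : 0 < clf (e-1) (a-1) := clf_pos (e-1) (a-1) (by omega) (by omega)
  have hFZ : (F : ℤ) = ((clf (e-1) (a-1) : ℤ) - 1) * a + ((a-1 : ℕ) : ℤ) * d := by
    rw [hFval]
    push_cast [Nat.cast_sub (show 1 ≤ clf (e-1) (a-1) from hclpos)]
    ring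
  constructor
  · -- symmetric → a ≡ 2 mod e-1
    intro hsym
    by_contra hne
    have hne' : (a - 1) % (e-1) ≠ 1 % (e-1) := by
      intro h
      apply hne
      have h2 : (a - 1 + 1) % (e-1) = (1 + 1) % (e-1) := Nat.ModEq.add_right 1 h
      have ha1 : a - 1 + 1 = a := by omega
      rw [ha1] at h2
      exact h2
    have hclf_eq : clf (e-1) (a - 1) = clf (e-1) (a - 2) := by
      have h2 : a - 2 + 1 = a - 1 := by omega
      have h3 := clf_succ_eq (e-1) (a-2) (by omega) (by rw [h2]; exact hne')
      rw [h2] at h3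
      exact h3
    rcases hsym (d : ℤ) with hmem | hmem
    · exact not_mem_HZ e a d he ha hd hcop H hH (show 1 < a by omega)
        (show (d:ℤ) = 0 * (a:ℤ) + ((1:ℕ):ℤ) * d by push_cast; ring)
        (by rw [clf_one (e-1) (by omega)]; norm_num) hmem
    · refine not_mem_HZ e a d he ha hd hcop H hH (show a - 2 < a by omega)
        (k := (clf (e-1) (a-1) : ℤ) - 1) ?_ ?_ hmem
      · rw [hFZ]
        push_cast [show ((a-2:ℕ):ℤ) = (a:ℤ) - 2 by push_cast; omega,
          show ((a-1:ℕ):ℤ) = (a:ℤ) - 1 by push_cast; omega]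
        ring
      · rw [hclf_eq]
        have h4 : (0:ℤ) < (clf (e-1) (a-2) : ℤ) := by
          exact_mod_cast clf_pos (e-1) (a-2) (by omega) (by omega)
        omega
  · -- a ≡ 2 mod e-1 → symmetric
    intro hmod
    have hone : (a - 1) % (e-1) = 1 := by
      have h1 : (a - 1 + 1) % (e-1) = (1 + 1) % (e-1) := by
        have hx : a - 1 + 1 = a := by omega
        rw [hx]; exact hmod
      have h2 : (a - 1) % (e-1) = 1 % (e-1) := Nat.ModEq.add_right_cancel' 1 h1
      rw [show (1:ℕ) % (e-1) = 1 from Nat.mod_eq_of_lt (by omega)] at h2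
      exact h2
    intro x
    obtain ⟨k, r, hra, hx⟩ := exists_rep a d ha hcop x
    by_cases hk : (clf (e-1) r : ℤ) ≤ k
    · left
      exact (mem_HZ_iff e a d he ha hd hcop H hH x).mpr ⟨k, r, hra, hx, hk⟩
    · right
      push_neg at hk
      have hkey : clf (e-1) r + clf (e-1) (a-1-r) ≤ clf (e-1) (a-1) := by
        have hsum : r + (a-1-r) = a - 1 := by omega
        have := clf_add_le (e-1) r (a-1-r) (by omega) (by rw [hsum]; exact hone)
        rwa [hsum] at this
      refine (mem_HZ_iff e a d he ha hd hcop H hH _).mpr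
        ⟨(clf (e-1) (a-1) : ℤ) - 1 - k, a-1-r, by omega, ?_, ?_⟩
      · rw [hFZ, hx]
        push_cast [show ((a-1-r:ℕ):ℤ) = ((a:ℤ) - 1) - r by push_cast; omega,
          show ((a-1:ℕ):ℤ) = (a:ℤ) - 1 by push_cast; omega]
        ring
      · have h1 : (clf (e-1) r : ℤ) + clf (e-1) (a-1-r) ≤ (clf (e-1) (a-1) : ℤ) := by
          exact_mod_cast hkey
        omega
end

section
/- Let e > 2 and H = ⟨a, a+d, …, a+(e−1)d⟩ with gcd(a,d) = 1, d ≥ 1, and e ≤ a. Write a = k(e−1) + τ + 1 with 1 ≤ τ ≤ e−1 and k = ⌊(a−2)/(e−1)⌋. Then the set of pseudo-Frobenius numbers of H is PF(H) = {Fr(H) − (τ−1)d, …, Fr(H) − d, Fr(H)} with Fr(H) = ak + d(a−1). In particular, the type of H is τ. -/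
lemma mem_closure_iff' (e a d : ℕ) (he : 2 < e) (n : ℕ) :
    n ∈ AddSubmonoid.closure (Set.range fun i : Fin e => a + (i : ℕ) * d) ↔
      ∃ q t, t ≤ q * (e - 1) ∧ n = q * a + t * d := by
  constructor
  · intro hn
    induction hn using AddSubmonoid.closure_induction with
    | mem x hx =>
      obtain ⟨i, rfl⟩ := hx
      exact ⟨1, i, by have := i.isLt; omega, by ring⟩
    | zero => exact ⟨0, 0, by simp, by simp⟩
    | add x y hx hy ihx ihy =>
      obtain ⟨q1, t1, h1, rfl⟩ := ihx
      obtain ⟨q2, t2, h2, rfl⟩ := ihy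
      exact ⟨q1 + q2, t1 + t2, by
        have : (q1+q2)*(e-1) = q1*(e-1) + q2*(e-1) := by ring
        linarith, by ring⟩
  · rintro ⟨q, t, hle, rfl⟩
    induction q generalizing t with
    | zero =>
      have : t = 0 := by omega
      subst this; simpa using zero_mem _
    | succ q ih =>
      set s := min t (e-1) with hs
      have hse : s < e := by omega
      have h1 : t - s ≤ q * (e - 1) := by
        rcases le_or_gt t (e-1) with h | h
        · have : s = t := min_eq_left h
          omega
        · have hse' : s = e - 1 := min_eq_right (le_of_lt h)
          have : (q+1)*(e-1) = q*(e-1) + (e-1) := by ring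
          omega
      have h2 : (q+1)*a + t*d = (q*a + (t - s)*d) + (a + s*d) := by
        obtain ⟨u, hu⟩ : ∃ u, t = u + s := ⟨t - s, by omega⟩
        rw [hu, Nat.add_sub_cancel]; ring
      rw [h2]
      exact add_mem (ih _ h1)
        (AddSubmonoid.subset_closure ⟨⟨s, hse⟩, rfl⟩)

lemma rep_unique' (a d : ℕ) (ha : 0 < a) (hcop : Nat.Coprime a d)
    {q q' t t' : ℕ} (ht : t < a) (ht' : t' < a)
    (h : q * a + t * d = q' * a + t' * d) : t = t' ∧ q = q' := by
  have hcop' : IsCoprime (a : ℤ) (d : ℤ) := by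
    rw [Int.isCoprime_iff_gcd_eq_one]
    exact_mod_cast hcop
  have hz : ((q : ℤ) - q') * a = ((t' : ℤ) - t) * d := by
    have := congrArg (fun n : ℕ => (n : ℤ)) h
    push_cast at this
    ring_nf
    ring_nf at this
    linarith
  have hdvd : (a : ℤ) ∣ ((t' : ℤ) - t) * d :=
    ⟨(q : ℤ) - q', by linear_combination (-1 : ℤ) * hz⟩
  have hdvd2 : (a : ℤ) ∣ ((t' : ℤ) - t) := hcop'.dvd_of_dvd_mul_right hdvd
  have habs : |(t' : ℤ) - t| < a := abs_lt.mpr ⟨by omega, by omega⟩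
  have ht0 : ((t' : ℤ) - t) = 0 := Int.eq_zero_of_abs_lt_dvd hdvd2 habs
  have htt : t = t' := by omega
  subst htt
  refine ⟨rfl, ?_⟩
  have : q * a = q' * a := by omega
  exact Nat.eq_of_mul_eq_mul_right ha this

lemma mem_norm_iff' (e a d : ℕ) (he : 2 < e) (ha : 0 < a) (n : ℕ) :
    n ∈ AddSubmonoid.closure (Set.range fun i : Fin e => a + (i : ℕ) * d) ↔
      ∃ q t, t < a ∧ t ≤ q * (e - 1) ∧ n = q * a + t * d := by
  rw [mem_closure_iff' e a d he]
  constructor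
  · rintro ⟨q, t, hle, rfl⟩
    clear he
    induction t using Nat.strong_induction_on generalizing q with
    | _ t ih =>
      by_cases h : t < a
      · exact ⟨q, t, h, hle, rfl⟩
      · obtain ⟨u, hu⟩ : ∃ u, t = u + a := ⟨t - a, by omega⟩
        have h1 : u ≤ (q + d) * (e - 1) := by
          have : q * (e-1) ≤ (q+d)*(e-1) := Nat.mul_le_mul_right _ (by omega)
          omega
        obtain ⟨q', t', ha', hb', hc'⟩ := ih u (by omega) (q + d) h1
        exact ⟨q', t', ha', hb', by rw [hc'.symm, hu]; ring⟩
  · rintro ⟨q, t, _, hle, rfl⟩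
    exact ⟨q, t, hle, rfl⟩

lemma pf_add' (e a d : ℕ) (he : 2 < e) (ha : 0 < a) (f : ℕ)
    (hgen : ∀ j < e, f + (a + j * d) ∈
      AddSubmonoid.closure (Set.range fun i : Fin e => a + (i : ℕ) * d)) :
    ∀ h ∈ AddSubmonoid.closure (Set.range fun i : Fin e => a + (i : ℕ) * d),
      h ≠ 0 → f + h ∈
        AddSubmonoid.closure (Set.range fun i : Fin e => a + (i : ℕ) * d) := by
  intro h hh hne
  obtain ⟨q, s, hle, rfl⟩ := (mem_closure_iff' e a d he _).mp hh
  rcases q with _ | q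
  · exfalso
    simp only [Nat.zero_mul] at hle
    have hs0 : s = 0 := by omega
    subst hs0
    simp at hne
  · set j := min s (e-1) with hj
    have hje : j < e := by omega
    have h1 : s - j ≤ q * (e - 1) := by
      rcases le_or_gt s (e-1) with h | h
      · have : j = s := min_eq_left h
        omega
      · have hse' : j = e - 1 := min_eq_right (le_of_lt h)
        have : (q+1)*(e-1) = q*(e-1) + (e-1) := by ring
        omega
    have h2 : f + ((q+1)*a + s*d) = (f + (a + j*d)) + (q*a + (s - j)*d) := by
      obtain ⟨u, hu⟩ : ∃ u, s = u + j := ⟨s - j, by omega⟩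
      rw [hu, Nat.add_sub_cancel]; ring
    rw [h2]
    exact add_mem (hgen j hje)
      ((mem_closure_iff' e a d he _).mpr ⟨q, s - j, h1, rfl⟩)

theorem arithmetic_pf' (e a d : ℕ) (he : 2 < e) (ha : 0 < a) (hd : 0 < d)
    (hcop : Nat.Coprime a d) (hea : e ≤ a)
    (H : AddSubmonoid ℕ)
    (hH : H = AddSubmonoid.closure (Set.range fun i : Fin e => a + (i : ℕ) * d))
    (k τ : ℕ) (hka : a = k * (e - 1) + τ + 1) (hτ1 : 1 ≤ τ) (hτ2 : τ ≤ e - 1) :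
    ({f | f ∉ H ∧ ∀ h ∈ H, h ≠ 0 → f + h ∈ H} : Set ℕ)
        = {x : ℕ | ∃ i < τ, x = a * k + d * (a - 1) - i * d} ∧
      ({f | f ∉ H ∧ ∀ h ∈ H, h ≠ 0 → f + h ∈ H} : Set ℕ).ncard = τ := by
  subst hH
  have hA : a - 1 = k * (e-1) + τ := by rw [hka]; simp
  have hkey : ∀ i, i ≤ a - 1 → a*k + d*(a-1) - i*d = k*a + (a-1-i)*d := by
    intro i hi
    apply Nat.sub_eq_of_eq_add
    have h1 : (a-1-i) + i = a - 1 := by omega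
    rw [add_assoc, ← Nat.add_mul, h1]; ring
  have hmain : ({f | f ∉ AddSubmonoid.closure (Set.range fun i : Fin e => a + (i : ℕ) * d) ∧
      ∀ h ∈ AddSubmonoid.closure (Set.range fun i : Fin e => a + (i : ℕ) * d), h ≠ 0 →
        f + h ∈ AddSubmonoid.closure (Set.range fun i : Fin e => a + (i : ℕ) * d)} : Set ℕ)
      = {x : ℕ | ∃ i < τ, x = a * k + d * (a - 1) - i * d} := by
    ext f
    constructor
    · rintro ⟨hfnot, hfadd⟩
      have hcond : ∀ j, j < e → f + (a + j * d) ∈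
          AddSubmonoid.closure (Set.range fun i : Fin e => a + (i : ℕ) * d) := by
        intro j hj
        have hg : a + j * d ∈
            AddSubmonoid.closure (Set.range fun i : Fin e => a + (i : ℕ) * d) :=
          AddSubmonoid.subset_closure ⟨⟨j, hj⟩, rfl⟩
        exact hfadd _ hg (by
          have : 0 < a + j*d := Nat.lt_of_lt_of_le ha (Nat.le_add_right a _)
          omega)
      have h0 := hcond 0 (by omega)
      rw [show f + (a + 0*d) = f + a by ring] at h0
      obtain ⟨q0, t, hta, htle, heq⟩ := (mem_norm_iff' e a d he ha _).mp h0
      have hq0pos : 1 ≤ q0 := by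
        rcases Nat.eq_zero_or_pos q0 with h | h
        · subst h
          simp only [Nat.zero_mul] at htle
          have : t = 0 := by omega
          subst this
          simp at heq
          omega
        · exact h
      obtain ⟨m, hm⟩ : ∃ m, q0 = m + 1 := ⟨q0 - 1, by omega⟩
      rw [hm] at heq htle
      have hf_eq : f = m * a + t * d := by
        have hb : (m+1) * a = m*a + a := by ring
        omega
      have hmt : m * (e-1) < t := by
        by_contra hcon
        push_neg at hcon
        exact hfnot ((mem_closure_iff' e a d he _).mpr ⟨m, t, hcon, hf_eq⟩)
      have ht1 : 1 ≤ t := by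
        have : 0 ≤ m * (e-1) := Nat.zero_le _
        omega
      have htlow : k * (e-1) < t := by
        by_contra hcon
        push_neg at hcon
        by_cases hcase : t + (e-1) < a
        · have hmem := hcond (e-1) (by omega)
          have heq2 : f + (a + (e-1) * d) = (m+1) * a + (t + (e-1)) * d := by
            rw [hf_eq]; ring
          rw [heq2] at hmem
          obtain ⟨q', t', h1', h2', h3'⟩ := (mem_norm_iff' e a d he ha _).mp hmem
          obtain ⟨hteq, hqeq⟩ := rep_unique' a d ha hcop hcase h1' h3'
          subst hteq
          subst hqeq
          have hb : (m+1)*(e-1) = m*(e-1) + (e-1) := by ring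
          omega
        · push_neg at hcase
          set j := a - 1 - t with hjdef
          have hj2 : j < e := by omega
          have hjt : t + j = a - 1 := by omega
          have hmem := hcond j hj2
          have heq3 : f + (a + j * d) = (m+1) * a + (a-1) * d := by
            rw [hf_eq, ← hjt]; ring
          rw [heq3] at hmem
          obtain ⟨q', t', h1', h2', h3'⟩ := (mem_norm_iff' e a d he ha _).mp hmem
          obtain ⟨hteq, hqeq⟩ := rep_unique' a d ha hcop (by omega : a - 1 < a) h1' h3'
          subst hteq
          subst hqeq
          have hmk : m < k :=
            lt_of_mul_lt_mul_right (show m*(e-1) < k*(e-1) by omega) (Nat.zero_le _)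
          have hmono : (m+1) * (e-1) ≤ k * (e-1) := Nat.mul_le_mul_right _ (by omega)
          omega
      refine ⟨a - 1 - t, by omega, ?_⟩
      rw [hkey (a-1-t) (by omega)]
      have hsub : a - 1 - (a - 1 - t) = t := by omega
      rw [hsub]
      have hmk1 : m < k + 1 := by
        refine lt_of_mul_lt_mul_right (show m*(e-1) < (k+1)*(e-1) from ?_) (Nat.zero_le _)
        have hb : (k+1)*(e-1) = k*(e-1) + (e-1) := by ring
        omega
      have hk1 : k < m + 1 := by
        refine lt_of_mul_lt_mul_right (show k*(e-1) < (m+1)*(e-1) from ?_) (Nat.zero_le _)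
        have hb : (m+1)*(e-1) = m*(e-1) + (e-1) := by ring
        omega
      have hmk : m = k := by omega
      rw [hf_eq, hmk]
    · rintro ⟨i, hiτ, rfl⟩
      have hia : i ≤ a - 1 := by omega
      rw [hkey i hia]
      set t := a - 1 - i with htdef
      have hta : t < a := by omega
      refine ⟨?_, ?_⟩
      · intro hmem
        obtain ⟨q', t', h1', h2', h3'⟩ := (mem_norm_iff' e a d he ha _).mp hmem
        obtain ⟨hteq, hqeq⟩ := rep_unique' a d ha hcop hta h1' h3'
        subst hteq
        subst hqeq
        omega
      · apply pf_add' e a d he ha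
        intro j hj
        by_cases hcase : t + j < a
        · apply (mem_norm_iff' e a d he ha _).mpr
          refine ⟨k+1, t+j, hcase, ?_, by ring⟩
          have hb : (k+1)*(e-1) = k*(e-1) + (e-1) := by ring
          omega
        · push_neg at hcase
          apply (mem_norm_iff' e a d he ha _).mpr
          obtain ⟨u, hu⟩ : ∃ u, t + j = u + a := ⟨t + j - a, by omega⟩
          refine ⟨k+1+d, u, by omega, ?_, ?_⟩
          · have hb : e - 1 ≤ (k+1+d)*(e-1) := Nat.le_mul_of_pos_left _ (by omega)
            omega
          · have h6 : t*d + j*d = u*d + a*d := by rw [← Nat.add_mul, hu, Nat.add_mul]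
            have e1 : (k+1+d)*a = k*a + a + d*a := by ring
            have e3 : d*a = a*d := Nat.mul_comm d a
            omega
  refine ⟨hmain, ?_⟩
  rw [hmain]
  have hset : {x : ℕ | ∃ i < τ, x = a*k + d*(a-1) - i*d}
      = ↑((Finset.range τ).image (fun i => a*k + d*(a-1) - i*d)) := by
    ext x
    simp only [Finset.coe_image, Finset.coe_range, Set.mem_image, Set.mem_Iio,
      Set.mem_setOf_eq]
    constructor
    · rintro ⟨i, h1, h2⟩; exact ⟨i, h1, h2.symm⟩
    · rintro ⟨i, h1, h2⟩; exact ⟨i, h1, h2.symm⟩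
  have hbound : ∀ x, x < τ → x * d < a*k + d*(a-1) := by
    intro x hx
    have h1 : x * d ≤ (a-2) * d := Nat.mul_le_mul_right _ (by omega)
    have h2 : (a-1) * d = (a-2) * d + d := by
      have : a - 1 = (a-2) + 1 := by omega
      rw [this, Nat.add_mul, Nat.one_mul]
    have h3 : (a-1)*d = d*(a-1) := Nat.mul_comm _ _
    omega
  have hinj : Set.InjOn (fun i => a*k + d*(a-1) - i*d) ↑(Finset.range τ) := by
    intro i hi j hj hij
    simp only [Finset.coe_range, Set.mem_Iio] at hi hj
    simp only at hij
    have hi' := hbound i hi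
    have hj' := hbound j hj
    have : i * d = j * d := by omega
    exact Nat.eq_of_mul_eq_mul_right hd this
  rw [hset, Set.ncard_coe_finset, Finset.card_image_of_injOn hinj, Finset.card_range]

/-- Let `e > 2` and `H = ⟨a, a+d, …, a+(e−1)d⟩` with `gcd(a,d) = 1`, `d ≥ 1`,
`e ≤ a`. Write `a = k(e−1) + τ + 1` with `1 ≤ τ ≤ e−1`. Then
`PF(H) = {Fr(H) − (τ−1)d, …, Fr(H) − d, Fr(H)}` with `Fr(H) = ak + d(a−1)`;
in particular the type of `H` is `τ`. -/
theorem arithmetic_pf (e a d : ℕ) (he : 2 < e) (ha : 0 < a) (hd : 0 < d)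
    (hcop : Nat.Coprime a d) (hea : e ≤ a)
    (H : AddSubmonoid ℕ)
    (hH : H = AddSubmonoid.closure (Set.range fun i : Fin e => a + (i : ℕ) * d))
    (k τ : ℕ) (hka : a = k * (e - 1) + τ + 1) (hτ1 : 1 ≤ τ) (hτ2 : τ ≤ e - 1) :
    PF H = {x : ℕ | ∃ i < τ, x = a * k + d * (a - 1) - i * d} ∧
      (PF H).ncard = τ :=
  arithmetic_pf' e a d he ha hd hcop hea H hH k τ hka hτ1 hτ2
end

section
/- Let e > 2 and H = ⟨a, a+d, …, a+(e−1)d⟩ with gcd(a,d) = 1 and e ≤ a. Then H is nearly Gorenstein, i.e., every nonzero element of H belongs to tr(H) = Ω_H + Ω_H^{-1}. -/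
open Pointwise

section aux

variable {e a d : ℕ} {H : AddSubmonoid ℕ}

lemma mem_of_rep (he : 2 < e)
    (hH : H = AddSubmonoid.closure (Set.range fun i : Fin e => a + (i : ℕ) * d)) :
    ∀ k t : ℕ, t ≤ k * (e - 1) → k * a + t * d ∈ H := by
  intro k
  induction k with
  | zero => intro t ht; simp at ht; simpa [ht] using zero_mem H
  | succ k ih =>
    intro t ht
    by_cases h : t ≤ e - 1
    · have hg : a + t * d ∈ H := by
        subst hH
        exact AddSubmonoid.subset_closure ⟨⟨t, by omega⟩, by simp⟩
      have hk : k * a + 0 * d ∈ H := ih 0 (by simp)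
      have : (k + 1) * a + t * d = (a + t * d) + (k * a + 0 * d) := by ring
      rw [this]
      exact add_mem hg hk
    · obtain ⟨u, rfl⟩ : ∃ u, t = u + (e - 1) := ⟨t - (e - 1), by omega⟩
      have hg : a + (e - 1) * d ∈ H := by
        subst hH
        exact AddSubmonoid.subset_closure ⟨⟨e - 1, by omega⟩, by simp⟩
      have hu : u ≤ k * (e - 1) := by
        rw [Nat.succ_mul] at ht; omega
      have : (k + 1) * a + (u + (e - 1)) * d = (a + (e - 1) * d) + (k * a + u * d) := by ring
      rw [this]
      exact add_mem hg (ih u hu)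

lemma rep_of_mem (he : 2 < e)
    (hH : H = AddSubmonoid.closure (Set.range fun i : Fin e => a + (i : ℕ) * d)) :
    ∀ n ∈ H, ∃ k t : ℕ, t ≤ k * (e - 1) ∧ n = k * a + t * d := by
  subst hH
  intro n hn
  induction hn using AddSubmonoid.closure_induction with
  | mem x hx =>
    obtain ⟨i, rfl⟩ := hx
    exact ⟨1, (i : ℕ), by have := i.isLt; omega, by ring⟩
  | zero => exact ⟨0, 0, by simp, by simp⟩
  | add x y _ _ hx hy =>
    obtain ⟨k1, t1, h1, rfl⟩ := hx
    obtain ⟨k2, t2, h2, rfl⟩ := hy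
    exact ⟨k1 + k2, t1 + t2, by rw [add_mul]; omega, by ring⟩

lemma memHZ (he : 2 < e)
    (hH : H = AddSubmonoid.closure (Set.range fun i : Fin e => a + (i : ℕ) * d)) :
    ∀ k t : ℤ, 0 ≤ t → t ≤ k * ((e : ℤ) - 1) → k * a + t * d ∈ HZ H := by
  intro k t ht htk
  have hk : 0 ≤ k := by nlinarith
  lift k to ℕ using hk
  lift t to ℕ using ht
  refine ⟨k * a + t * d, mem_of_rep he hH k t ?_, by push_cast; ring⟩
  have : ((t : ℤ)) ≤ (k : ℤ) * ((e - 1 : ℕ) : ℤ) := by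
    rwa [show ((e - 1 : ℕ) : ℤ) = (e : ℤ) - 1 by omega]
  exact_mod_cast this

lemma bound_of_memHZ (he : 2 < e) (ha : 0 < a) (hcop : Nat.Coprime a d)
    (hH : H = AddSubmonoid.closure (Set.range fun i : Fin e => a + (i : ℕ) * d)) :
    ∀ k t : ℤ, 0 ≤ t → t < a → k * a + t * d ∈ HZ H → t ≤ k * ((e : ℤ) - 1) := by
  intro k t ht hta hmem
  obtain ⟨n, hn, hcast⟩ := hmem
  obtain ⟨k', t', h', rfl⟩ := rep_of_mem he hH n hn
  have heq : (k' : ℤ) * a + (t' : ℤ) * d = k * a + t * d := by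
    rw [← hcast]; push_cast; ring
  have hdvd : (a : ℤ) ∣ ((t' : ℤ) - t) * d := ⟨k - k', by linarith [heq]⟩
  have hco : IsCoprime (a : ℤ) (d : ℤ) := by
    rw [Int.isCoprime_iff_gcd_eq_one, Int.gcd_natCast_natCast]; exact hcop
  obtain ⟨m, hm⟩ := (IsCoprime.dvd_of_dvd_mul_right hco hdvd)
  have hm0 : 0 ≤ m := by nlinarith [hm]
  have hkk : k = k' + m * d := by
    have h2 : (k - k' - m * d) * (a : ℤ) = 0 := by nlinarith [hm, heq]
    have ha' : (a : ℤ) ≠ 0 := by positivity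
    have := mul_eq_zero.mp h2
    rcases this with h | h
    · linarith
    · exact absurd h ha'
  have ht' : (t' : ℤ) ≤ (k' : ℤ) * ((e : ℤ) - 1) := by
    have : (t' : ℤ) ≤ (k' : ℤ) * ((e - 1 : ℕ) : ℤ) := by exact_mod_cast h'
    rwa [show ((e - 1 : ℕ) : ℤ) = (e : ℤ) - 1 by omega] at this
  have h1 : t ≤ (t' : ℤ) := by nlinarith [hm]
  have h2 : (k' : ℤ) ≤ k := by nlinarith [hkk]
  nlinarith [ht', h1, h2]

lemma exists_can_rep (ha : 0 < a) (hcop : Nat.Coprime a d) :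
    ∀ v : ℤ, ∃ k t : ℤ, 0 ≤ t ∧ t < a ∧ v = k * a + t * d := by
  intro v
  have hco : IsCoprime (a : ℤ) (d : ℤ) := by
    rw [Int.isCoprime_iff_gcd_eq_one, Int.gcd_natCast_natCast]; exact hcop
  obtain ⟨p, q, hpq⟩ := hco
  have ha' : (0 : ℤ) < a := by exact_mod_cast ha
  refine ⟨v * p + (v * q / a) * d, (v * q) % a, Int.emod_nonneg _ (by positivity), Int.emod_lt_of_pos _ ha', ?_⟩
  have hdm := Int.mul_ediv_add_emod (v * q) a
  linear_combination (-v) * hpq - (d : ℤ) * hdm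

end aux

lemma HZ_add {H : AddSubmonoid ℕ} {z : ℤ} {h : ℕ} (hz : z ∈ HZ H) (hh : h ∈ H) :
    z + (h : ℤ) ∈ HZ H := by
  obtain ⟨m, hm, rfl⟩ := hz
  exact ⟨m + h, add_mem hm hh, by push_cast; ring⟩


/-- Let `e > 2` and `H = ⟨a, a+d, …, a+(e−1)d⟩` with `gcd(a,d) = 1` and
`e ≤ a`. Then `H` is nearly Gorenstein: every nonzero element of `H` lies in
`tr(H) = Ω_H + Ω_H⁻¹`. -/
theorem arithmetic_nearly_gorenstein (e a d : ℕ) (he : 2 < e) (ha : 0 < a)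
    (hd : 0 < d) (hcop : Nat.Coprime a d) (hea : e ≤ a)
    (H : AddSubmonoid ℕ)
    (hH : H = AddSubmonoid.closure (Set.range fun i : Fin e => a + (i : ℕ) * d))
    (F : ℕ) (hF : IsGreatest {x : ℕ | x ∉ H} F) :
    ∀ x ∈ HZ H, x ≠ 0 → x ∈ Omega H F + OmegaInv H F := by
  intro x hx hx0
  obtain ⟨n, hnH, hnx⟩ := hx
  have hn0 : n ≠ 0 := by rintro rfl; exact hx0 (by exact_mod_cast hnx.symm)
  obtain ⟨k, t, htk, hneq⟩ := rep_of_mem he hH n hnH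
  have hkpos : k ≠ 0 := by
    rintro rfl
    simp only [Nat.zero_mul, Nat.le_zero] at htk
    subst htk
    simp at hneq
    exact hn0 hneq
  obtain ⟨k', rfl⟩ := Nat.exists_eq_succ_of_ne_zero hkpos
  set s := min t (e - 1) with hs_def
  have hsE : s ≤ e - 1 := min_le_right _ _
  have hst : s ≤ t := min_le_left _ _
  -- decomposition n = (a + s*d) + h'
  have hdecomp : ∃ h' : ℕ, h' ∈ H ∧ (n : ℤ) = ((a : ℤ) + s * d) + h' := by
    refine ⟨k' * a + (t - s) * d, mem_of_rep he hH k' (t - s) ?_, ?_⟩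
    · rcases le_total t (e - 1) with h | h
      · have : s = t := min_eq_left h
        omega
      · have hse : s = e - 1 := min_eq_right h
        rw [Nat.succ_mul] at htk
        omega
    · rw [hneq]
      push_cast [Nat.cast_sub hst]
      ring
  obtain ⟨h', hh'H, hh'eq⟩ := hdecomp
  -- the numerical data
  set r : ℕ := (a - 2) % (e - 1) with hr_def
  set Q : ℕ := (a - 2) / (e - 1) with hQ_def
  have hdm : (e - 1) * Q + r = a - 2 := Nat.div_add_mod (a - 2) (e - 1)
  have hrE : r < e - 1 := Nat.mod_lt _ (by omega)
  set i : ℕ := if e ≤ s + r + 1 then s + r + 1 - e else 0 with hi_def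
  have hi_r : i ≤ r := by rw [hi_def]; split <;> omega
  have hi_s : i ≤ s := by rw [hi_def]; split <;> omega
  have hkeyN : s + r + 1 ≤ e + i := by rw [hi_def]; split <;> omega
  have hia : i + 2 ≤ a := by omega
  set c : ℕ := Q * a + (a - 1 - i) * d with hc_def
  have hceq : (c : ℤ) = (Q : ℤ) * a + ((a : ℤ) - 1 - i) * d := by
    have h1 : ((a - 1 - i : ℕ) : ℤ) = (a : ℤ) - 1 - i := by omega
    rw [hc_def]
    push_cast [h1]
    ring
  have hdmz : ((e : ℤ) - 1) * Q + r = (a : ℤ) - 2 := by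
    have h1 : ((e - 1 : ℕ) : ℤ) = (e : ℤ) - 1 := by omega
    have h2 : ((a - 2 : ℕ) : ℤ) = (a : ℤ) - 2 := by omega
    have h3 := congrArg (Nat.cast : ℕ → ℤ) hdm
    push_cast at h3
    rw [h1, h2] at h3
    exact h3
  -- c is a gap
  have hcnot : (c : ℤ) ∉ HZ H := by
    intro hc
    rw [hceq] at hc
    have hb := bound_of_memHZ he ha hcop hH (Q : ℤ) ((a : ℤ) - 1 - i)
      (by omega) (by omega) hc
    have hi_r' : (i : ℤ) ≤ r := by exact_mod_cast hi_r
    linarith [hdmz, hb, hi_r']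
  -- assemble
  rw [Set.mem_add]
  refine ⟨(F : ℤ) - c, ?_, x - ((F : ℤ) - c), ?_, by ring⟩
  · simp only [Omega, Set.mem_setOf_eq]
    have : (F : ℤ) - ((F : ℤ) - c) = c := by ring
    rw [this]
    exact hcnot
  · intro ω hω
    simp only [Omega, Set.mem_setOf_eq] at hω
    obtain ⟨kv, tv, htv0, htva, hveq⟩ := exists_can_rep ha hcop ((F : ℤ) - ω)
    have hgap : ¬ tv ≤ kv * ((e : ℤ) - 1) := fun hle =>
      hω (by rw [hveq]; exact memHZ he hH kv tv htv0 hle)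
    have htv : kv * ((e : ℤ) - 1) + 1 ≤ tv := Int.add_one_le_iff.mpr (not_le.mp hgap)
    -- the core membership
    have hmain : ((a : ℤ) + s * d) + c - ((F : ℤ) - ω) ∈ HZ H := by
      have hgoal : ((a : ℤ) + s * d) + c - ((F : ℤ) - ω)
          = ((Q : ℤ) + 1 - kv) * a + ((a : ℤ) - 1 + s - i - tv) * d := by
        rw [hceq, hveq]; ring
      rw [hgoal]
      apply memHZ he hH
      · have hi_s' : (i : ℤ) ≤ s := by exact_mod_cast hi_s
        linarith [htva, hi_s']
      · have hkeyz : (s : ℤ) + r + 1 ≤ (e : ℤ) + i := by exact_mod_cast hkeyN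
        linarith [hdmz, htv, hkeyz]
    have hfin : x - ((F : ℤ) - c) + ω
        = (((a : ℤ) + s * d) + c - ((F : ℤ) - ω)) + (h' : ℤ) := by
      rw [← hnx, hh'eq]; ring
    rw [hfin]
    exact HZ_add hmain hh'H
end
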